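/- arXiv:1603.06507 — 2 statements merged into one kernel-verified Lean document; each statement's English description precedes it below -/
import Mathlib

section
/- Let X and Y be independent with X ~ exp(1) and Y having density N e^{−y}(1−e^{−y})^{N−1} on [0,∞). Then for any z ≥ 0 and a > 0, P[X ≤ zY, Y ≥ a] = N Σ_{k=0}^{N−1} C(N−1,k)(−1)^k e^{−a(k+1)} [1/(k+1) − e^{−az}/(z+k+1)]. -/
open MeasureTheory Real Finset
lemma exp_int_Ioi (c b : ℝ) (hc : 0 < c) :
    ∫ y in Set.Ioi b, Real.exp (-c * y) = Real.exp (-c * b) / c := by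
  have hderiv : ∀ x ∈ Set.Ioi b,
      HasDerivAt (fun y => -Real.exp (-c * y) / c) (Real.exp (-c * x)) x := by
    intro x _
    have h1 : HasDerivAt (fun y : ℝ => -c * y) (-c) x := by
      simpa using (hasDerivAt_id x).const_mul (-c)
    have h2 := (h1.exp).neg.div_const c
    refine h2.congr_deriv ?_
    rw [div_eq_iff hc.ne']; ring
  have hint : IntegrableOn (fun y : ℝ => Real.exp (-c * y)) (Set.Ioi b) :=
    exp_neg_integrableOn_Ioi b hc
  have htend : Filter.Tendsto (fun y => -Real.exp (-c * y) / c) Filter.atTop (nhds 0) := by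
    have h0 : Filter.Tendsto (fun y : ℝ => c * y) Filter.atTop Filter.atTop :=
      Filter.Tendsto.const_mul_atTop hc Filter.tendsto_id
    have h1 : Filter.Tendsto (fun y : ℝ => -c * y) Filter.atTop Filter.atBot := by
      simpa [neg_mul] using Filter.tendsto_neg_atBot_iff.mpr h0
    have := (Real.tendsto_exp_atBot.comp h1).neg.div_const c
    simpa using this
  have hcont : ContinuousWithinAt (fun y => -Real.exp (-c * y) / c) (Set.Ici b) b := by
    exact (Continuous.continuousWithinAt (by continuity))
  have := integral_Ioi_of_hasDerivAt_of_tendsto hcont hderiv hint htend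
  rw [this]
  field_simp
  ring

lemma inner_int (w : ℝ) (hw : 0 ≤ w) :
    ∫ x in Set.Icc (0 : ℝ) w, Real.exp (-x) = 1 - Real.exp (-w) := by
  rw [MeasureTheory.integral_Icc_eq_integral_Ioc,
    ← intervalIntegral.integral_of_le hw]
  have : ∫ x in (0:ℝ)..w, Real.exp (-x) = ∫ x in (-w)..(0:ℝ), Real.exp x := by
    simpa using intervalIntegral.integral_comp_neg (a := 0) (b := w) (fun x => Real.exp x)
  rw [this, integral_exp]
  simp

set_option maxRecDepth 4000 in
/-- AP-BSL joint probability (Eq. (79)): X ~ exp(1) independent of Y with density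
N e^{−y}(1−e^{−y})^{N−1} on [0,∞); for z ≥ 0 and a > 0,
P[X ≤ zY, Y ≥ a] = N Σ_{k=0}^{N−1} C(N−1,k)(−1)^k e^{−a(k+1)}[1/(k+1) − e^{−az}/(z+k+1)]. -/
theorem joint_prob_AP_BSL (N : ℕ) (hN : 1 ≤ N) (z a : ℝ) (hz : 0 ≤ z) (ha : 0 < a) :
    ∫ y in Set.Ici a,
        (∫ x in Set.Icc (0 : ℝ) (z * y), Real.exp (-x)) *
          ((N : ℝ) * Real.exp (-y) * (1 - Real.exp (-y)) ^ (N - 1))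
      = (N : ℝ) * ∑ k ∈ Finset.range N,
          (Nat.choose (N - 1) k : ℝ) * (-1) ^ k * Real.exp (-a * ((k : ℝ) + 1)) *
            (1 / ((k : ℝ) + 1) - Real.exp (-a * z) / (z + (k : ℝ) + 1)) := by
  set F : ℕ → ℝ → ℝ := fun k y =>
    (N : ℝ) * (Nat.choose (N - 1) k : ℝ) * (-1) ^ k *
      (Real.exp (-((k : ℝ) + 1) * y) - Real.exp (-(z + (k : ℝ) + 1) * y)) with hF
  have hpt : ∀ y ∈ Set.Ioi a,
      (∫ x in Set.Icc (0 : ℝ) (z * y), Real.exp (-x)) *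
        ((N : ℝ) * Real.exp (-y) * (1 - Real.exp (-y)) ^ (N - 1))
      = ∑ k ∈ Finset.range N, F k y := by
    intro y hy
    have hy0 : 0 < y := ha.trans hy
    rw [inner_int (z * y) (mul_nonneg hz hy0.le)]
    have hbin : (1 - Real.exp (-y)) ^ (N - 1)
        = ∑ k ∈ Finset.range N, (-Real.exp (-y)) ^ k * (Nat.choose (N - 1) k : ℝ) := by
      have := add_pow (-Real.exp (-y)) 1 (N - 1)
      rw [Nat.sub_add_cancel hN] at this
      simpa [neg_add_eq_sub] using this
    rw [hbin, Finset.mul_sum, Finset.mul_sum]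
    refine Finset.sum_congr rfl fun k _ => ?_
    have e1 : Real.exp (-((k : ℝ) + 1) * y) = Real.exp (-y) ^ (k + 1) := by
      rw [← Real.exp_nat_mul]
      push_cast
      ring_nf
    have e2 : Real.exp (-(z + (k : ℝ) + 1) * y)
        = Real.exp (-(z * y)) * Real.exp (-y) ^ (k + 1) := by
      rw [← Real.exp_nat_mul, ← Real.exp_add]
      push_cast
      ring_nf
    have e0 : (-Real.exp (-y)) ^ k = (-1:ℝ)^k * Real.exp (-y) ^ k := by
      rw [neg_pow]
    rw [hF]
    simp only [e1, e2, e0]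
    ring
  rw [MeasureTheory.integral_Ici_eq_integral_Ioi,
    MeasureTheory.setIntegral_congr_fun measurableSet_Ioi hpt]
  have hintk : ∀ k ∈ Finset.range N, IntegrableOn (F k) (Set.Ioi a) := by
    intro k _
    have h1 : IntegrableOn (fun y : ℝ => Real.exp (-((k : ℝ) + 1) * y)) (Set.Ioi a) :=
      exp_neg_integrableOn_Ioi a (by positivity)
    have h2 : IntegrableOn (fun y : ℝ => Real.exp (-(z + (k : ℝ) + 1) * y)) (Set.Ioi a) :=
      exp_neg_integrableOn_Ioi a (by positivity)
    exact ((h1.sub h2).const_mul _)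
  rw [MeasureTheory.integral_finset_sum _ hintk, Finset.mul_sum]
  refine Finset.sum_congr rfl fun k _ => ?_
  have h1 : IntegrableOn (fun y : ℝ => Real.exp (-((k : ℝ) + 1) * y)) (Set.Ioi a) :=
    exp_neg_integrableOn_Ioi a (by positivity)
  have h2 : IntegrableOn (fun y : ℝ => Real.exp (-(z + (k : ℝ) + 1) * y)) (Set.Ioi a) :=
    exp_neg_integrableOn_Ioi a (by positivity)
  rw [hF]
  simp only
  rw [MeasureTheory.integral_const_mul, MeasureTheory.integral_sub h1 h2,
    exp_int_Ioi _ _ (by positivity : (0:ℝ) < (k : ℝ) + 1),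
    exp_int_Ioi _ _ (by positivity : (0:ℝ) < z + (k : ℝ) + 1)]
  have e3 : Real.exp (-(z + (k : ℝ) + 1) * a) = Real.exp (-a * ((k:ℝ)+1)) * Real.exp (-a * z) := by
    rw [← Real.exp_add]; ring_nf
  have e4 : Real.exp (-((k : ℝ) + 1) * a) = Real.exp (-a * ((k:ℝ)+1)) := by ring_nf
  rw [e3, e4]
  have d1 : ((k:ℝ)+1) ≠ 0 := by positivity
  have d2 : (z + (k:ℝ)+1) ≠ 0 := by positivity
  field_simp
end

section
/- Let W have density N e^{−w}(1−e^{−w})^{N−1} on [0,∞) (max of N i.i.d. exp(1)), and let X have the density (N/(N−1)) Σ_{k=1}^{N−1} C(N−1,k−1) e^{−x(N−k+1)}(1−e^{−x})^{k−1}, independent of W. Then for a, b > 0, P[W > a + X/b] = (N/(N−1)) Σ_{k=1}^{N−1} C(N−1,k−1)[I₁ − I₂], where I₁ = Σ_{m=0}^{k−1} C(k−1,m)(−1)^m/(N−k+m+1) and I₂ = Σ_{m=0}^{k−1} Σ_{ℓ=0}^{N} C(k−1,m)C(N,ℓ)(−1)^{m+ℓ}e^{−aℓ}/(N−k+m+ℓ/b+1).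 -/
open MeasureTheory Real Finset

private lemma int_exp_on {s : ℝ} (hs : 0 < s) :
    IntegrableOn (fun x => Real.exp (-(s * x))) (Set.Ioi (0:ℝ)) := by
  simpa [neg_mul] using exp_neg_integrableOn_Ioi 0 hs

private lemma exp_rate_tendsto {s : ℝ} (hs : 0 < s) :
    Filter.Tendsto (fun x : ℝ => Real.exp (-(s * x))) Filter.atTop (nhds 0) := by
  apply Real.tendsto_exp_atBot.comp
  exact Filter.tendsto_neg_atTop_atBot.comp (Filter.tendsto_id.const_mul_atTop hs)

private lemma int_exp {s : ℝ} (hs : 0 < s) :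
    ∫ x in Set.Ioi (0:ℝ), Real.exp (-(s * x)) = 1 / s := by
  have hd : ∀ x ∈ Set.Ioi (0:ℝ),
      HasDerivAt (fun x => -Real.exp (-(s * x)) / s) (Real.exp (-(s * x))) x := by
    intro x _
    have h1 : HasDerivAt (fun x : ℝ => -(s * x)) (-s) x := by
      have h := ((hasDerivAt_id x).const_mul s).neg; rw [mul_one] at h; exact h
    have h2 := (h1.exp.neg).div_const s
    exact h2.congr_deriv (by rw [div_eq_iff hs.ne']; ring)
  have ht : Filter.Tendsto (fun x => -Real.exp (-(s * x)) / s) Filter.atTop (nhds 0) := by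
    simpa using ((exp_rate_tendsto hs).neg).div_const s
  have hc : ContinuousWithinAt (fun x => -Real.exp (-(s * x)) / s) (Set.Ici 0) 0 := by
    apply Continuous.continuousWithinAt
    fun_prop
  rw [integral_Ioi_of_hasDerivAt_of_tendsto hc hd (int_exp_on hs) ht]
  simp only [mul_zero, neg_zero, Real.exp_zero, zero_sub, neg_neg]
  ring

/-- inner integral -/
private lemma inner_int_s17 (N : ℕ) {c : ℝ} (hc : 0 < c) :
    ∫ w in Set.Ioi c, (N : ℝ) * Real.exp (-w) * (1 - Real.exp (-w)) ^ (N - 1)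
      = 1 - (1 - Real.exp (-c)) ^ N := by
  have hg : ∀ w : ℝ, HasDerivAt (fun w => 1 - Real.exp (-w)) (Real.exp (-w)) w := by
    intro w
    have := ((Real.hasDerivAt_exp (-w)).comp w (hasDerivAt_neg w)).const_sub 1
    simpa using this
  have hd : ∀ w ∈ Set.Ioi c,
      HasDerivAt (fun w => (1 - Real.exp (-w)) ^ N)
        ((N : ℝ) * Real.exp (-w) * (1 - Real.exp (-w)) ^ (N - 1)) w := by
    intro w _
    have := (hg w).pow N
    exact this.congr_deriv (by ring)
  have hexp0 : Filter.Tendsto (fun w : ℝ => Real.exp (-w)) Filter.atTop (nhds 0) :=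
    Real.tendsto_exp_atBot.comp Filter.tendsto_neg_atTop_atBot
  have ht : Filter.Tendsto (fun w => (1 - Real.exp (-w)) ^ N) Filter.atTop (nhds 1) := by
    have h1 : Filter.Tendsto (fun w : ℝ => 1 - Real.exp (-w)) Filter.atTop (nhds (1 - 0)) :=
      (tendsto_const_nhds (x := (1:ℝ))).sub hexp0
    simpa using h1.pow N
  have hint : IntegrableOn
      (fun w => (N : ℝ) * Real.exp (-w) * (1 - Real.exp (-w)) ^ (N - 1)) (Set.Ioi c) := by
    apply Integrable.mono' (g := fun w => (N : ℝ) * Real.exp (-w))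
    · simpa [neg_mul] using (exp_neg_integrableOn_Ioi c one_pos).const_mul (N : ℝ)
    · apply Continuous.aestronglyMeasurable
      fun_prop
    · rw [ae_restrict_iff' measurableSet_Ioi]
      filter_upwards with w hw
      have hw0 : 0 < w := lt_trans hc hw
      have h1 : 0 ≤ 1 - Real.exp (-w) := by
        have : Real.exp (-w) ≤ 1 := Real.exp_le_one_iff.2 (by linarith)
        linarith
      have h2 : (1 - Real.exp (-w)) ^ (N - 1) ≤ 1 := by
        apply pow_le_one₀ h1
        have := Real.exp_pos (-w); linarith
      have hE := Real.exp_pos (-w)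
      rw [Real.norm_eq_abs, abs_of_nonneg (by positivity)]
      calc (N : ℝ) * Real.exp (-w) * (1 - Real.exp (-w)) ^ (N - 1)
          ≤ (N : ℝ) * Real.exp (-w) * 1 := by
            apply mul_le_mul_of_nonneg_left h2 (by positivity)
        _ = (N : ℝ) * Real.exp (-w) := by ring
  have hc' : ContinuousWithinAt (fun w => (1 - Real.exp (-w)) ^ N) (Set.Ici c) c := by
    apply Continuous.continuousWithinAt; fun_prop
  rw [integral_Ioi_of_hasDerivAt_of_tendsto hc' hd hint ht]

private lemma intQ (N : ℕ) {a b s : ℝ} (ha : 0 < a) (hb : 0 < b) (hs : 0 < s) :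
    IntegrableOn
      (fun x => (1 - (1 - Real.exp (-(a + x / b))) ^ N) * Real.exp (-(s * x)))
      (Set.Ioi (0:ℝ)) := by
  apply Integrable.mono' (g := fun x => Real.exp (-(s * x))) (int_exp_on hs)
  · apply Continuous.aestronglyMeasurable; fun_prop
  · rw [ae_restrict_iff' measurableSet_Ioi]
    filter_upwards with x hx
    have hx0 : (0:ℝ) < x := hx
    have hcpos : 0 < a + x / b := by positivity
    have h1 : 0 ≤ 1 - Real.exp (-(a + x / b)) := by
      have : Real.exp (-(a + x / b)) ≤ 1 := Real.exp_le_one_iff.2 (by linarith)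
      linarith
    have hQ0 : 0 ≤ (1 - Real.exp (-(a + x / b))) ^ N := pow_nonneg h1 N
    have hQ1 : (1 - Real.exp (-(a + x / b))) ^ N ≤ 1 := by
      apply pow_le_one₀ h1
      have := Real.exp_pos (-(a + x / b)); linarith
    rw [Real.norm_eq_abs, abs_mul, abs_of_nonneg (by linarith : (0:ℝ) ≤ 1 - _),
      abs_of_nonneg (Real.exp_nonneg _)]
    nlinarith [Real.exp_pos (-(s * x))]

/-- key single-rate integral -/
private lemma key (N : ℕ) {a b s : ℝ} (ha : 0 < a) (hb : 0 < b) (hs : 0 < s) :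
    ∫ x in Set.Ioi (0:ℝ),
        (1 - (1 - Real.exp (-(a + x / b))) ^ N) * Real.exp (-(s * x))
      = 1 / s - ∑ l ∈ Finset.range (N + 1),
          (Nat.choose N l : ℝ) * (-1) ^ l * Real.exp (-a * l) / (s + l / b) := by
  have hpt : ∀ x ∈ Set.Ioi (0:ℝ),
      (1 - (1 - Real.exp (-(a + x / b))) ^ N) * Real.exp (-(s * x))
        = Real.exp (-(s * x)) - ∑ l ∈ Finset.range (N + 1),
            ((Nat.choose N l : ℝ) * (-1) ^ l * Real.exp (-a * l)) *
              Real.exp (-((s + l / b) * x)) := by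
    intro x hx
    have hexpand : (1 - Real.exp (-(a + x / b))) ^ N
        = ∑ l ∈ Finset.range (N + 1),
            (-Real.exp (-(a + x / b))) ^ l * (Nat.choose N l : ℝ) := by
      rw [show (1:ℝ) - Real.exp (-(a + x / b)) = -Real.exp (-(a + x / b)) + 1 by ring,
        add_pow]
      simp
    rw [hexpand, sub_mul, one_mul, Finset.sum_mul]
    congr 1
    refine Finset.sum_congr rfl fun l _ => ?_
    rw [neg_pow, ← Real.exp_nat_mul,
      show (l : ℝ) * -(a + x / b) = (-a * l) + -((l / b) * x) by field_simp; ring,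
      Real.exp_add,
      show -((s + l / b) * x) = -(s * x) + -((l / b) * x) by ring, Real.exp_add]
    ring
  rw [setIntegral_congr_fun measurableSet_Ioi hpt]
  have hl : ∀ l ∈ Finset.range (N + 1),
      IntegrableOn
        (fun x => ((Nat.choose N l : ℝ) * (-1) ^ l * Real.exp (-a * l)) *
          Real.exp (-((s + l / b) * x))) (Set.Ioi (0:ℝ)) := by
    intro l _
    exact (int_exp_on (by positivity : (0:ℝ) < s + l / b)).const_mul _
  rw [integral_sub (int_exp_on hs) (integrable_finset_sum _ hl),
    integral_finset_sum _ hl, int_exp hs]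
  congr 1
  refine Finset.sum_congr rfl fun l _ => ?_
  rw [MeasureTheory.integral_const_mul, int_exp (by positivity : (0:ℝ) < s + l / b)]
  ring

/-- EP-BPL relay success probability (Lemma 2, Eq. (25)): W has the max-of-N-exp(1) density
and X the averaged order-statistic density, independent; then for a, b > 0,
P[W > a + X/b] = (N/(N−1)) Σ_{k=1}^{N−1} C(N−1,k−1)[I₁ − I₂]. -/
theorem fr_EP_BPL (N : ℕ) (hN : 2 ≤ N) (a b : ℝ) (ha : 0 < a) (hb : 0 < b) :
    ∫ x in Set.Ioi (0 : ℝ),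
        (∫ w in Set.Ioi (a + x / b),
            (N : ℝ) * Real.exp (-w) * (1 - Real.exp (-w)) ^ (N - 1)) *
          (((N : ℝ) / ((N : ℝ) - 1)) * ∑ k ∈ Finset.Icc 1 (N - 1),
            (Nat.choose (N - 1) (k - 1) : ℝ) * Real.exp (-x * ((N : ℝ) - k + 1)) *
              (1 - Real.exp (-x)) ^ (k - 1))
      = ((N : ℝ) / ((N : ℝ) - 1)) * ∑ k ∈ Finset.Icc 1 (N - 1),
          (Nat.choose (N - 1) (k - 1) : ℝ) *
            ((∑ m ∈ Finset.range k,
                (Nat.choose (k - 1) m : ℝ) * (-1) ^ m / ((N : ℝ) - k + m + 1))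
              - ∑ m ∈ Finset.range k, ∑ l ∈ Finset.range (N + 1),
                  (Nat.choose (k - 1) m : ℝ) * (Nat.choose N l : ℝ) * (-1) ^ (m + l) *
                    Real.exp (-a * l) / ((N : ℝ) - k + m + (l : ℝ) / b + 1)) := by
  have hspos : ∀ k ∈ Finset.Icc 1 (N - 1), ∀ m : ℕ, (0:ℝ) < (N : ℝ) - k + m + 1 := by
    intro k hk m
    obtain ⟨hk1, hk2⟩ := Finset.mem_Icc.1 hk
    have : (k : ℝ) ≤ (N : ℝ) - 1 := by
      have := (Nat.cast_le (α := ℝ)).2 hk2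
      rwa [Nat.cast_sub (by omega), Nat.cast_one] at this
    have : (0:ℝ) ≤ (m : ℝ) := Nat.cast_nonneg m
    push_cast
    linarith
  -- pointwise rewrite of the integrand
  have hpt : ∀ x ∈ Set.Ioi (0:ℝ),
      (∫ w in Set.Ioi (a + x / b),
          (N : ℝ) * Real.exp (-w) * (1 - Real.exp (-w)) ^ (N - 1)) *
        (((N : ℝ) / ((N : ℝ) - 1)) * ∑ k ∈ Finset.Icc 1 (N - 1),
          (Nat.choose (N - 1) (k - 1) : ℝ) * Real.exp (-x * ((N : ℝ) - k + 1)) *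
            (1 - Real.exp (-x)) ^ (k - 1))
      = ((N : ℝ) / ((N : ℝ) - 1)) * ∑ k ∈ Finset.Icc 1 (N - 1),
          ∑ m ∈ Finset.range k,
            ((Nat.choose (N - 1) (k - 1) : ℝ) * (Nat.choose (k - 1) m : ℝ) * (-1) ^ m) *
              ((1 - (1 - Real.exp (-(a + x / b))) ^ N) *
                Real.exp (-(((N : ℝ) - k + m + 1) * x))) := by
    intro x hx
    have hx0 : (0:ℝ) < x := hx
    rw [inner_int_s17 N (by positivity : (0:ℝ) < a + x / b)]
    rw [show (1 - (1 - Real.exp (-(a + x / b))) ^ N) *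
        (((N : ℝ) / ((N : ℝ) - 1)) * ∑ k ∈ Finset.Icc 1 (N - 1),
          (Nat.choose (N - 1) (k - 1) : ℝ) * Real.exp (-x * ((N : ℝ) - k + 1)) *
            (1 - Real.exp (-x)) ^ (k - 1))
      = ((N : ℝ) / ((N : ℝ) - 1)) * ∑ k ∈ Finset.Icc 1 (N - 1),
          (1 - (1 - Real.exp (-(a + x / b))) ^ N) *
            ((Nat.choose (N - 1) (k - 1) : ℝ) * Real.exp (-x * ((N : ℝ) - k + 1)) *
              (1 - Real.exp (-x)) ^ (k - 1)) by
        simp only [Finset.mul_sum]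
        exact Finset.sum_congr rfl fun k _ => by ring]
    congr 1
    refine Finset.sum_congr rfl fun k hk => ?_
    obtain ⟨hk1, _⟩ := Finset.mem_Icc.1 hk
    have hexpand : (1 - Real.exp (-x)) ^ (k - 1)
        = ∑ m ∈ Finset.range k, (-Real.exp (-x)) ^ m * (Nat.choose (k - 1) m : ℝ) := by
      rw [show (1:ℝ) - Real.exp (-x) = -Real.exp (-x) + 1 by ring, add_pow]
      rw [show k - 1 + 1 = k from Nat.succ_pred_eq_of_pos hk1]
      simp
    rw [hexpand, Finset.mul_sum, Finset.mul_sum]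
    refine Finset.sum_congr rfl fun m _ => ?_
    rw [neg_pow, ← Real.exp_nat_mul,
      show -(((N : ℝ) - k + m + 1) * x) = -x * ((N : ℝ) - k + 1) + (m : ℝ) * -x by ring,
      Real.exp_add]
    ring
  rw [setIntegral_congr_fun measurableSet_Ioi hpt, MeasureTheory.integral_const_mul]
  have hint : ∀ k ∈ Finset.Icc 1 (N - 1), ∀ m ∈ Finset.range k,
      IntegrableOn
        (fun x => ((Nat.choose (N - 1) (k - 1) : ℝ) * (Nat.choose (k - 1) m : ℝ) * (-1) ^ m) *
          ((1 - (1 - Real.exp (-(a + x / b))) ^ N) *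
            Real.exp (-(((N : ℝ) - k + m + 1) * x)))) (Set.Ioi (0:ℝ)) := fun k hk m _ =>
    (intQ N ha hb (hspos k hk m)).const_mul _
  rw [integral_finset_sum _ (fun k hk =>
    integrable_finset_sum _ (fun m hm => hint k hk m hm))]
  congr 1
  refine Finset.sum_congr rfl fun k hk => ?_
  rw [integral_finset_sum _ (fun m hm => hint k hk m hm)]
  have hval : ∀ m ∈ Finset.range k,
      (∫ x in Set.Ioi (0:ℝ),
        ((Nat.choose (N - 1) (k - 1) : ℝ) * (Nat.choose (k - 1) m : ℝ) * (-1) ^ m) *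
          ((1 - (1 - Real.exp (-(a + x / b))) ^ N) *
            Real.exp (-(((N : ℝ) - k + m + 1) * x))))
      = ((Nat.choose (N - 1) (k - 1) : ℝ) * (Nat.choose (k - 1) m : ℝ) * (-1) ^ m) *
          (1 / ((N : ℝ) - k + m + 1) - ∑ l ∈ Finset.range (N + 1),
            (Nat.choose N l : ℝ) * (-1) ^ l * Real.exp (-a * l) /
              (((N : ℝ) - k + m + 1) + l / b)) := by
    intro m _
    rw [MeasureTheory.integral_const_mul, key N ha hb (hspos k hk m)]
  rw [Finset.sum_congr rfl hval]
  simp only [mul_sub, Finset.mul_sum, Finset.sum_sub_distrib]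
  congr 1
  · exact Finset.sum_congr rfl fun m _ => by ring
  · exact Finset.sum_congr rfl fun m _ => Finset.sum_congr rfl fun l _ => by ring
end
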